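/- For a Gaussian source X ~ N(0, σ²) with quadratic distortion d(x,y) = (x-y)² and distortion level 0 < D < σ², the D-tilted information density equals ȷ_Y(x, D | P_X) = (1/2)·log(σ²/D) + (1/2)·(x²/σ² - 1), and consequently its variance under P_X equals 1/2. -/

import Mathlib

open MeasureTheory ProbabilityTheory Real
open scoped NNReal ENNReal

section AuxGTID

lemma gtid_integrable_pow_mul_exp' (n : ℕ) {b : ℝ} (hb : 0 < b) :
    Integrable (fun x : ℝ => x ^ n * rexp (-b * x ^ 2)) := by
  have h := integrable_rpow_mul_exp_neg_mul_sq hb (s := (n : ℝ))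
    (lt_of_lt_of_le neg_one_lt_zero (Nat.cast_nonneg n))
  simpa [Real.rpow_natCast] using h

lemma gtid_integral_pow_two_n_mul_exp (n : ℕ) {b : ℝ} (hb : 0 < b) :
    ∫ x : ℝ, (x ^ 2) ^ n * rexp (-b * x ^ 2)
      = b ^ (-(2 * (n:ℝ) + 1) / 2) * Real.Gamma ((2 * (n:ℝ) + 1) / 2) := by
  have habs : ∫ x : ℝ, (x ^ 2) ^ n * rexp (-b * x ^ 2)
      = 2 * ∫ x in Set.Ioi (0:ℝ), x ^ (2*n) * rexp (-b * x ^ 2) := by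
    rw [← integral_comp_abs (f := fun t => t ^ (2*n) * rexp (-b * t ^ 2))]
    congr 1 with x
    rw [pow_mul, sq_abs]
  rw [habs]
  have h2 : ∫ x in Set.Ioi (0:ℝ), x ^ (2*n) * rexp (-b * x ^ 2)
      = b ^ (-(2*(n:ℝ)+1)/2) * (1/2) * Real.Gamma ((2*(n:ℝ)+1)/2) := by
    rw [← integral_rpow_mul_exp_neg_mul_rpow (p := 2) (q := 2*(n:ℝ)) two_pos
      (lt_of_lt_of_le neg_one_lt_zero (by positivity)) hb]
    refine setIntegral_congr_fun measurableSet_Ioi (fun x hx => ?_)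
    rw [show (2*(n:ℝ)) = ((2*n : ℕ) : ℝ) by push_cast; ring,
      Real.rpow_natCast, show ((2:ℝ)) = ((2 : ℕ) : ℝ) by norm_num, Real.rpow_natCast]
  rw [h2]; ring

lemma gtid_gamma_three_halves : Real.Gamma (3/2) = Real.sqrt π / 2 := by
  rw [show (3:ℝ)/2 = 1/2 + 1 by norm_num, Real.Gamma_add_one (by norm_num),
    Real.Gamma_one_half_eq]
  ring

lemma gtid_gamma_five_halves : Real.Gamma (5/2) = 3 * Real.sqrt π / 4 := by
  rw [show (5:ℝ)/2 = 3/2 + 1 by norm_num, Real.Gamma_add_one (by norm_num),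
    gtid_gamma_three_halves]
  ring

lemma gtid_gaussianPDF_eq_coe_toNNReal (m : ℝ) (v : ℝ≥0) :
    gaussianPDF m v = fun x => (((gaussianPDFReal m v x).toNNReal : ℝ≥0) : ℝ≥0∞) := rfl

lemma gtid_integral_gaussianReal_eq (m : ℝ) {v : ℝ≥0} (hv : v ≠ 0) (g : ℝ → ℝ) :
    ∫ x, g x ∂(gaussianReal m v) = ∫ x, gaussianPDFReal m v x * g x := by
  rw [gaussianReal_of_var_ne_zero _ hv, gtid_gaussianPDF_eq_coe_toNNReal,
    integral_withDensity_eq_integral_smul ((measurable_gaussianPDFReal m v).real_toNNReal) g]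
  congr 1 with x
  rw [NNReal.smul_def, smul_eq_mul, Real.coe_toNNReal _ (gaussianPDFReal_nonneg m v x)]

lemma gtid_integrable_gaussianReal_iff (m : ℝ) {v : ℝ≥0} (hv : v ≠ 0) (g : ℝ → ℝ) :
    Integrable g (gaussianReal m v)
      ↔ Integrable (fun x => gaussianPDFReal m v x * g x) := by
  rw [gaussianReal_of_var_ne_zero _ hv, gtid_gaussianPDF_eq_coe_toNNReal,
    integrable_withDensity_iff_integrable_smul
      ((measurable_gaussianPDFReal m v).real_toNNReal)]
  refine integrable_congr (Filter.Eventually.of_forall fun x => ?_)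
  show (gaussianPDFReal m v x).toNNReal • g x = _
  rw [NNReal.smul_def, smul_eq_mul, Real.coe_toNNReal _ (gaussianPDFReal_nonneg m v x)]

lemma gtid_tilted_integral {d t : ℝ} (hd : 0 < d) (ht : 0 < t) (x : ℝ) :
    ∫ y : ℝ, (√(2*π*t))⁻¹ * rexp (-(y-0)^2/(2*t)) * rexp (-(1/(2*d)) * ((x - y)^2 - d))
      = Real.sqrt (d / (d + t)) * rexp (1/2 - x^2/(2*(d+t))) := by
  have hdt : 0 < d + t := by linarith
  have hπ : (0:ℝ) < π := pi_pos
  set a : ℝ := (d+t)/(2*d*t) with ha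
  have hapos : 0 < a := by positivity
  set m : ℝ := x*t/(d+t) with hm
  have hpoint : ∀ y : ℝ,
      (√(2*π*t))⁻¹ * rexp (-(y-0)^2/(2*t)) * rexp (-(1/(2*d)) * ((x - y)^2 - d))
      = ((√(2*π*t))⁻¹ * rexp (1/2 - x^2/(2*(d+t)))) * rexp (-a * (y - m)^2) := by
    intro y
    rw [mul_assoc ((√(2*π*t))⁻¹), ← Real.exp_add, mul_assoc ((√(2*π*t))⁻¹), ← Real.exp_add]
    congr 2
    rw [ha, hm]
    field_simp
    ring
  have h1 : (∫ y : ℝ, (√(2*π*t))⁻¹ * rexp (-(y-0)^2/(2*t)) * rexp (-(1/(2*d)) * ((x - y)^2 - d)))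
      = ∫ y : ℝ, ((√(2*π*t))⁻¹ * rexp (1/2 - x^2/(2*(d+t)))) * rexp (-a * (y - m)^2) :=
    integral_congr_ae (Filter.Eventually.of_forall hpoint)
  rw [h1, integral_const_mul]
  have h2 : (∫ y : ℝ, rexp (-a * (y - m)^2)) = ∫ y : ℝ, rexp (-a * y^2) :=
    integral_sub_right_eq_self (fun y => rexp (-a * y^2)) m
  rw [h2, integral_gaussian]
  have h3 : (√(2*π*t))⁻¹ * √(π/a) = √(d/(d+t)) := by
    rw [← Real.sqrt_inv, ← Real.sqrt_mul (by positivity)]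
    congr 1
    rw [ha]
    field_simp
  rw [mul_right_comm, h3]

lemma gtid_integrable_pow_gaussianReal {v : ℝ≥0} (hv : v ≠ 0) (n : ℕ) :
    Integrable (fun x : ℝ => x ^ n) (gaussianReal 0 v) := by
  have hv' : (0:ℝ) < v := NNReal.coe_pos.mpr (pos_iff_ne_zero.mpr hv)
  rw [gtid_integrable_gaussianReal_iff 0 hv]
  have hb : (0:ℝ) < (2*(v:ℝ))⁻¹ := by positivity
  refine ((gtid_integrable_pow_mul_exp' n hb).const_mul ((√(2*π*(v:ℝ)))⁻¹)).congr
    (Filter.Eventually.of_forall fun x => ?_)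
  simp only [gaussianPDFReal]
  have h : -(x-0)^2/(2*(v:ℝ)) = -((2*(v:ℝ))⁻¹) * x^2 := by field_simp; ring
  rw [h]; ring

lemma gtid_sqrt_two_pi_v (v : ℝ) (hv : 0 < v) : √(2*π*v) = √π * √(2*v) := by
  rw [show 2*π*v = π * (2*v) by ring, Real.sqrt_mul pi_pos.le]

lemma gtid_inv_rpow_neg_eq {c : ℝ} (hc : 0 < c) (r : ℝ) : (c⁻¹) ^ (-r) = c ^ r := by
  rw [Real.inv_rpow hc.le, Real.rpow_neg hc.le, inv_inv]

lemma gtid_rpow_to_sqrt_pow {c : ℝ} (hc : 0 < c) (n : ℕ) : c ^ ((n:ℝ)/2) = (√c) ^ n := by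
  rw [← Real.rpow_natCast (√c) n, Real.sqrt_eq_rpow, ← Real.rpow_mul hc.le]
  congr 1
  ring

lemma gtid_integral_sq_gaussianReal {v : ℝ≥0} (hv : v ≠ 0) :
    ∫ x, x ^ 2 ∂(gaussianReal 0 v) = (v:ℝ) := by
  have hv' : (0:ℝ) < v := NNReal.coe_pos.mpr (pos_iff_ne_zero.mpr hv)
  have hb : (0:ℝ) < (2*(v:ℝ))⁻¹ := by positivity
  rw [gtid_integral_gaussianReal_eq 0 hv]
  have hpt : ∀ x : ℝ, gaussianPDFReal 0 v x * x ^ 2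
      = (√(2*π*(v:ℝ)))⁻¹ * ((x^2)^1 * rexp (-((2*(v:ℝ))⁻¹) * x^2)) := by
    intro x
    simp only [gaussianPDFReal]
    have h : -(x-0)^2/(2*(v:ℝ)) = -((2*(v:ℝ))⁻¹) * x^2 := by field_simp; ring
    rw [h]; ring
  rw [integral_congr_ae (Filter.Eventually.of_forall hpt), integral_const_mul,
    gtid_integral_pow_two_n_mul_exp 1 hb,
    show (-(2 * ((1:ℕ):ℝ) + 1) / 2) = -(((3:ℕ):ℝ)/2) by norm_num,
    show ((2 * ((1:ℕ):ℝ) + 1) / 2) = (3/2 : ℝ) by norm_num,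
    gtid_gamma_three_halves, gtid_inv_rpow_neg_eq (by positivity),
    gtid_rpow_to_sqrt_pow (by positivity), gtid_sqrt_two_pi_v _ hv']
  set s : ℝ := √(2*(v:ℝ)) with hsdef
  set p : ℝ := √π with hpdef
  have h2v : s^2 = 2*(v:ℝ) := Real.sq_sqrt (by positivity)
  have hsp : s ≠ 0 := ne_of_gt (Real.sqrt_pos.mpr (by positivity))
  have hpp : p ≠ 0 := ne_of_gt (Real.sqrt_pos.mpr pi_pos)
  rw [pow_succ, h2v]
  field_simp

lemma gtid_integral_pow4_gaussianReal {v : ℝ≥0} (hv : v ≠ 0) :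
    ∫ x, x ^ 4 ∂(gaussianReal 0 v) = 3 * (v:ℝ)^2 := by
  have hv' : (0:ℝ) < v := NNReal.coe_pos.mpr (pos_iff_ne_zero.mpr hv)
  have hb : (0:ℝ) < (2*(v:ℝ))⁻¹ := by positivity
  rw [gtid_integral_gaussianReal_eq 0 hv]
  have hpt : ∀ x : ℝ, gaussianPDFReal 0 v x * x ^ 4
      = (√(2*π*(v:ℝ)))⁻¹ * ((x^2)^2 * rexp (-((2*(v:ℝ))⁻¹) * x^2)) := by
    intro x
    simp only [gaussianPDFReal]
    have h : -(x-0)^2/(2*(v:ℝ)) = -((2*(v:ℝ))⁻¹) * x^2 := by field_simp; ring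
    rw [h]; ring
  rw [integral_congr_ae (Filter.Eventually.of_forall hpt), integral_const_mul,
    gtid_integral_pow_two_n_mul_exp 2 hb,
    show (-(2 * ((2:ℕ):ℝ) + 1) / 2) = -(((5:ℕ):ℝ)/2) by norm_num,
    show ((2 * ((2:ℕ):ℝ) + 1) / 2) = (5/2 : ℝ) by norm_num,
    gtid_gamma_five_halves, gtid_inv_rpow_neg_eq (by positivity),
    gtid_rpow_to_sqrt_pow (by positivity), gtid_sqrt_two_pi_v _ hv']
  set s : ℝ := √(2*(v:ℝ)) with hsdef
  set p : ℝ := √π with hpdef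
  have h2v : s^2 = 2*(v:ℝ) := Real.sq_sqrt (by positivity)
  have hsp : s ≠ 0 := ne_of_gt (Real.sqrt_pos.mpr (by positivity))
  have hpp : p ≠ 0 := ne_of_gt (Real.sqrt_pos.mpr pi_pos)
  rw [show s^5 = s^2 * s^2 * s by ring, h2v]
  field_simp
  ring

lemma gtid_variance_quadratic {v : ℝ≥0} (hv : v ≠ 0) (A B : ℝ) :
    variance (fun x : ℝ => A + B * x ^ 2) (gaussianReal 0 v) = 2 * B^2 * (v:ℝ)^2 := by
  have hint2 : Integrable (fun x : ℝ => x^2) (gaussianReal 0 v) :=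
    gtid_integrable_pow_gaussianReal hv 2
  have hint4 : Integrable (fun x : ℝ => x^4) (gaussianReal 0 v) :=
    gtid_integrable_pow_gaussianReal hv 4
  have hmem : MemLp (fun x : ℝ => A + B * x ^ 2) 2 (gaussianReal 0 v) := by
    have h1 : MemLp (fun x : ℝ => x ^ 2) 2 (gaussianReal 0 v) := by
      rw [memLp_two_iff_integrable_sq
        ((continuous_pow 2).measurable.aestronglyMeasurable)]
      refine hint4.congr (Filter.Eventually.of_forall fun x => ?_)
      ring
    exact (memLp_const A).add (h1.const_mul B)
  rw [variance_eq_sub hmem]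
  have hEX : ∫ x, (A + B * x ^ 2) ∂(gaussianReal 0 v) = A + B * (v:ℝ) := by
    rw [integral_add (integrable_const A) (hint2.const_mul B), integral_const,
      integral_const_mul, gtid_integral_sq_gaussianReal hv]
    simp
  have hEX2 : ∫ x, (A + B * x ^ 2) ^ 2 ∂(gaussianReal 0 v)
      = A^2 + (2*A*B*(v:ℝ) + B^2*(3*(v:ℝ)^2)) := by
    have hpt : ∀ x : ℝ, (A + B * x ^ 2) ^ 2 = A^2 + ((2*A*B)*x^2 + B^2*x^4) := by
      intro x; ring
    have hg : Integrable (fun a : ℝ => 2*A*B*a^2 + B^2*a^4) (gaussianReal 0 v) :=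
      ((hint2.const_mul (2*A*B)).add (hint4.const_mul (B^2))).congr
        (Filter.Eventually.of_forall fun x => rfl)
    rw [integral_congr_ae (Filter.Eventually.of_forall hpt),
      integral_add (integrable_const _) hg,
      integral_add (hint2.const_mul _) (hint4.const_mul _), integral_const,
      integral_const_mul, integral_const_mul, gtid_integral_sq_gaussianReal hv,
      gtid_integral_pow4_gaussianReal hv]
    simp
  have hsq : ∫ x, ((fun x : ℝ => A + B * x ^ 2) ^ 2) x ∂(gaussianReal 0 v)
      = ∫ x, (A + B * x ^ 2) ^ 2 ∂(gaussianReal 0 v) := by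
    refine integral_congr_ae (Filter.Eventually.of_forall fun x => ?_)
    simp [pow_two]
  rw [hsq, hEX2, hEX]
  ring

end AuxGTID

/-- For a Gaussian source N(0,σ²) with quadratic distortion and 0 < D < σ²,
the D-tilted information density (with optimal output distribution
P* = N(0, σ² - D) and tilt parameter s* = 1/(2D)) equals
(1/2)·log(σ²/D) + (1/2)·(x²/σ² - 1), and its variance under N(0,σ²) is 1/2. -/
theorem gaussian_tilted_information_density
    (σ2 D : NNReal) (hD : 0 < D) (hDσ : D < σ2) :
    (∀ x : ℝ,
      - Real.log (∫ y, Real.exp (-(1 / (2 * (D : ℝ))) * ((x - y) ^ 2 - (D : ℝ)))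
          ∂(gaussianReal 0 (σ2 - D)))
        = (1 / 2) * Real.log ((σ2 : ℝ) / (D : ℝ)) + (1 / 2) * (x ^ 2 / (σ2 : ℝ) - 1)) ∧
    variance (fun x : ℝ =>
        (1 / 2) * Real.log ((σ2 : ℝ) / (D : ℝ)) + (1 / 2) * (x ^ 2 / (σ2 : ℝ) - 1))
      (gaussianReal 0 σ2) = 1 / 2 := by
  have hD' : (0:ℝ) < D := NNReal.coe_pos.mpr hD
  have hσ' : (0:ℝ) < σ2 := NNReal.coe_pos.mpr (hD.trans hDσ)
  have htsub : (0:ℝ≥0) < σ2 - D := tsub_pos_of_lt hDσ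
  have hcoe : ((σ2 - D : ℝ≥0) : ℝ) = (σ2:ℝ) - (D:ℝ) := NNReal.coe_sub hDσ.le
  have ht' : (0:ℝ) < ((σ2 - D : ℝ≥0) : ℝ) := NNReal.coe_pos.mpr htsub
  constructor
  · intro x
    have key := gtid_tilted_integral (d := (D:ℝ)) (t := ((σ2 - D : ℝ≥0) : ℝ)) hD' ht' x
    have hsum : (D:ℝ) + ((σ2 - D : ℝ≥0) : ℝ) = (σ2:ℝ) := by rw [hcoe]; ring
    rw [hsum] at key
    have hint : ∫ y, Real.exp (-(1 / (2 * (D : ℝ))) * ((x - y) ^ 2 - (D : ℝ)))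
          ∂(gaussianReal 0 (σ2 - D))
        = Real.sqrt ((D:ℝ) / (σ2:ℝ)) * rexp (1/2 - x^2/(2*(σ2:ℝ))) := by
      rw [gtid_integral_gaussianReal_eq 0 htsub.ne']
      rw [← key]
      refine integral_congr_ae (Filter.Eventually.of_forall fun y => ?_)
      simp only [gaussianPDFReal]
    rw [hint, Real.log_mul (ne_of_gt (Real.sqrt_pos.mpr (by positivity)))
      (Real.exp_ne_zero _), Real.log_exp, Real.log_sqrt (by positivity),
      Real.log_div hD'.ne' hσ'.ne', Real.log_div hσ'.ne' hD'.ne']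
    field_simp
    ring
  · have hfun : (fun x : ℝ =>
        (1 / 2) * Real.log ((σ2 : ℝ) / (D : ℝ)) + (1 / 2) * (x ^ 2 / (σ2 : ℝ) - 1))
        = fun x : ℝ => ((1 / 2) * Real.log ((σ2 : ℝ) / (D : ℝ)) - 1/2)
            + (1/(2*(σ2:ℝ))) * x ^ 2 := by
      funext x
      field_simp
      ring
    rw [hfun, gtid_variance_quadratic (by exact_mod_cast hσ'.ne') _ _]
    field_simp
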